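/- arXiv:1707.08859 — 2 statements merged into one kernel-verified Lean document; each statement's English description precedes it below -/
import Mathlib

section
/- Let P, Q be real polynomials in two variables and f(x,y) = x² + y² − 1/2. If there exists a polynomial k with P·(∂f/∂x) + Q·(∂f/∂y) = k·f, then there exist polynomials A, B, C such that P = A·f − 2C·y and Q = B·f + 2C·x. -/
open MvPolynomial

/-- If the circle x² + y² − 1/2 = 0 is invariant for the planar polynomial
vector field (P, Q), then P = A·f − 2C·y and Q = B·f + 2C·x for some
polynomials A, B, C. -/
theorem circle_invariant_structure
    (P Q : MvPolynomial (Fin 2) ℝ)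
    (f : MvPolynomial (Fin 2) ℝ)
    (hf : f = X 0 ^ 2 + X 1 ^ 2 - C (1 / 2 : ℝ))
    (h : ∃ k : MvPolynomial (Fin 2) ℝ,
      P * pderiv 0 f + Q * pderiv 1 f = k * f) :
    ∃ A B C' : MvPolynomial (Fin 2) ℝ,
      P = A * f - 2 * C' * X 1 ∧ Q = B * f + 2 * C' * X 0 := by
  obtain ⟨k, hk⟩ := h
  subst hf
  simp only [map_add, map_sub, pderiv_X, pderiv_C, pderiv_pow, Pi.single_eq_same,
    Pi.single_eq_of_ne (by decide : (0 : Fin 2) ≠ 1),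
    Pi.single_eq_of_ne (by decide : (1 : Fin 2) ≠ 0)] at hk
  have hC : (C (1 / 2 : ℝ) : MvPolynomial (Fin 2) ℝ) * 2 = 1 := by
    rw [← map_ofNat (C : ℝ →+* MvPolynomial (Fin 2) ℝ) 2, ← map_mul]
    norm_num
  refine ⟨X 0 * k - 2 * P, X 1 * k - 2 * Q, X 0 * Q - X 1 * P, ?_, ?_⟩
  · linear_combination (X 0 : MvPolynomial (Fin 2) ℝ) * hk - P * hC
  · linear_combination (X 1 : MvPolynomial (Fin 2) ℝ) * hk - Q * hC
end

section
/- Let P₁, P₂, P₃, P₄ be real polynomials in variables x₁, x₂, x₃, x₄, let f = x₁² + x₂² − 1/2 and g = x₃² + x₄² − 1/2. If there exist polynomials K₁, K₂ such that P₁·(2x₁) + P₂·(2x₂) + P₃·0 + P₄·0 = K₁·f (i.e., the derivative of f along the vector field (P₁,P₂,P₃,P₄) equals K₁·f) and the derivative of g along the vector field equals K₂·g, then there exist polynomials A, B, C, D, E, F in x₁,…,x₄ such that P₁ = A·f − 2C·x₂, P₂ = B·f + 2C·x₁, P₃ = D·g − 2F·x₄, P₄ = E·g + 2F·x₃. -/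
open MvPolynomial

/-- Theorem 1 of the paper: if the polynomial vector field (P₁,P₂,P₃,P₄) on ℝ⁴
has both hypersurfaces f = x₁²+x₂²−1/2 = 0 and g = x₃²+x₄²−1/2 = 0 invariant
(so the Clifford torus is invariant), then the Pᵢ have the stated form. -/
theorem clifford_torus_invariant_structure
    (P : Fin 4 → MvPolynomial (Fin 4) ℝ)
    (f g : MvPolynomial (Fin 4) ℝ)
    (hf : f = X 0 ^ 2 + X 1 ^ 2 - C (1 / 2 : ℝ))
    (hg : g = X 2 ^ 2 + X 3 ^ 2 - C (1 / 2 : ℝ))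
    (h1 : ∃ K₁ : MvPolynomial (Fin 4) ℝ, ∑ i, P i * pderiv i f = K₁ * f)
    (h2 : ∃ K₂ : MvPolynomial (Fin 4) ℝ, ∑ i, P i * pderiv i g = K₂ * g) :
    ∃ A B C' D E F : MvPolynomial (Fin 4) ℝ,
      P 0 = A * f - 2 * C' * X 1 ∧
      P 1 = B * f + 2 * C' * X 0 ∧
      P 2 = D * g - 2 * F * X 3 ∧
      P 3 = E * g + 2 * F * X 2 := by
  obtain ⟨K₁, h1⟩ := h1
  obtain ⟨K₂, h2⟩ := h2
  subst hf hg
  have hC : (C (1/2 : ℝ) : MvPolynomial (Fin 4) ℝ) * 2 = 1 := by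
    rw [show (2 : MvPolynomial (Fin 4) ℝ) = C 2 from (map_ofNat C 2).symm, ← map_mul]
    norm_num
  simp only [Fin.sum_univ_four, map_sub, map_add, pderiv_C, pderiv_X,
    Derivation.leibniz_pow, Pi.single_apply, smul_eq_mul, pow_one, Fin.reduceEq, mul_zero,
    mul_one, if_true, if_false, reduceIte, sub_zero, add_zero, zero_add] at h1 h2
  norm_num at h1 h2
  refine ⟨X 0 * K₁ - 2 * P 0, X 1 * K₁ - 2 * P 1, X 0 * P 1 - X 1 * P 0,
    X 2 * K₂ - 2 * P 2, X 3 * K₂ - 2 * P 3, X 2 * P 3 - X 3 * P 2, ?_, ?_, ?_, ?_⟩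
  · linear_combination X 0 * h1 - P 0 * hC
  · linear_combination X 1 * h1 - P 1 * hC
  · linear_combination X 2 * h2 - P 2 * hC
  · linear_combination X 3 * h2 - P 3 * hC
end
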